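/- For every real λ > 0 and every nonnegative integer n, the partial sums of the exponential series satisfy s_n(λ)/s_{n+1}(λ) + s_{n+2}(λ)/s_{n+3}(λ) < 2·s_{n+1}(λ)/s_{n+2}(λ). -/

import Mathlib

/-- The `n`-th partial sum of the Taylor series of the exponential function. -/
noncomputable def s (n : ℕ) (a : ℝ) : ℝ :=
  ∑ j ∈ Finset.range (n + 1), a ^ j / (Nat.factorial j : ℝ)

/-! ### Auxiliary machinery -/

noncomputable def wt (s i : ℕ) : ℝ := ((i.factorial : ℝ) * ((s-i).factorial : ℝ))⁻¹

lemma wt_pos (s i : ℕ) : 0 < wt s i := by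
  have h1 : (0:ℝ) < (i.factorial : ℝ) := by exact_mod_cast i.factorial_pos
  have h2 : (0:ℝ) < ((s-i).factorial : ℝ) := by exact_mod_cast (s-i).factorial_pos
  exact inv_pos.mpr (mul_pos h1 h2)

lemma choose_mono_half {s l : ℕ} : ∀ i, l ≤ i → 2*i ≤ s → s.choose l ≤ s.choose i := by
  intro i
  induction i with
  | zero => intro h _; interval_cases l; exact le_refl _
  | succ k ih =>
    intro hl h
    rcases Nat.eq_or_lt_of_le hl with rfl | hlk
    · exact le_refl _
    · exact le_trans (ih (by omega) (by omega))
        (Nat.choose_le_succ_of_lt_half_left (by omega))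

lemma choose_window {s l i : ℕ} (hl : l ≤ i) (hi : i ≤ s - l) (hls : 2*l ≤ s) :
    s.choose l ≤ s.choose i := by
  rcases le_or_gt (2*i) s with h | h
  · exact choose_mono_half i hl h
  · have his : i ≤ s := by omega
    rw [← Nat.choose_symm his]
    exact choose_mono_half (s-i) (by omega) (by omega)

lemma fact_window {s l i : ℕ} (hl : l ≤ i) (hi : i ≤ s - l) (hls : 2*l ≤ s) :
    i.factorial * (s-i).factorial ≤ l.factorial * (s-l).factorial := by
  have his : i ≤ s := by omega
  have hls' : l ≤ s := by omega
  have h1 := Nat.choose_mul_factorial_mul_factorial his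
  have h2 := Nat.choose_mul_factorial_mul_factorial hls'
  have hc := choose_window hl hi hls
  have hcpos : 0 < s.choose l := Nat.choose_pos hls'
  have key : s.choose l * (i.factorial * (s-i).factorial) ≤ s.choose l * (l.factorial * (s-l).factorial) := by
    calc s.choose l * (i.factorial * (s-i).factorial)
        ≤ s.choose i * (i.factorial * (s-i).factorial) := Nat.mul_le_mul_right _ hc
      _ = s.factorial := by rw [← h1]; ring
      _ = s.choose l * (l.factorial * (s-l).factorial) := by rw [← h2]; ring
  exact Nat.le_of_mul_le_mul_left key hcpos

lemma wt_window {s l i : ℕ} (hl : l ≤ i) (hi : i ≤ s - l) (hls : 2*l ≤ s) :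
    wt s l ≤ wt s i := by
  unfold wt
  apply inv_anti₀
  · have h1 : (0:ℝ) < (i.factorial : ℝ) := by exact_mod_cast i.factorial_pos
    have h2 : (0:ℝ) < ((s-i).factorial : ℝ) := by exact_mod_cast (s-i).factorial_pos
    exact mul_pos h1 h2
  · exact_mod_cast fact_window hl hi hls

lemma key_window (s : ℕ) : ∀ k l : ℕ, s = 2*l + k →
    0 ≤ ∑ i ∈ Finset.Icc l (s-l), (((k:ℝ))*((k:ℝ)+2) - 3*((s:ℝ)-2*i)^2) * wt s i := by
  intro k
  induction k using Nat.strong_induction_on with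
  | _ k ih =>
    intro l hs
    match k, ih with
    | 0, _ =>
      have h1 : s - l = l := by omega
      rw [h1, Finset.Icc_self, Finset.sum_singleton]
      have h2 : (s:ℝ) - 2*l = 0 := by
        have : (s:ℝ) = 2*l := by exact_mod_cast congrArg (Nat.cast : ℕ → ℝ) hs
        linarith
      rw [h2]; ring_nf; exact le_refl _
    | 1, _ =>
      have h1 : s - l = l + 1 := by omega
      rw [h1, Finset.sum_Icc_succ_top (by omega), Finset.Icc_self, Finset.sum_singleton]
      have hc : (s:ℝ) = 2*l+1 := by exact_mod_cast congrArg (Nat.cast : ℕ → ℝ) hs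
      have h2 : (s:ℝ) - 2*l = 1 := by linarith
      have h3 : (s:ℝ) - 2*(l+1 : ℕ) = -1 := by push_cast; linarith
      rw [h2, h3]; ring_nf; exact le_refl _
    | (k+2), ih =>
      have hsl : s - l = l + k + 2 := by omega
      have hsl1 : s - (l+1) = l + k + 1 := by omega
      have hls : 2*l ≤ s := by omega
      rw [hsl]
      rw [show l + k + 2 = (l + k + 1) + 1 by ring, Finset.sum_Icc_succ_top (by omega)]
      have hsplit : Finset.Icc l (l+k+1) = insert l (Finset.Icc (l+1) (l+k+1)) := by
        ext x; simp only [Finset.mem_Icc, Finset.mem_insert]; omega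
      rw [hsplit, Finset.sum_insert (by simp only [Finset.mem_Icc]; omega)]
      have hIH := ih k (by omega) (l+1) (by omega)
      rw [hsl1] at hIH
      have hwts : ((k:ℝ)+1) * wt s l ≤ ∑ i ∈ Finset.Icc (l+1) (l+k+1), wt s i := by
        have hcard : (Finset.Icc (l+1) (l+k+1)).card = k+1 := by
          rw [Nat.card_Icc]; omega
        have := Finset.card_nsmul_le_sum (Finset.Icc (l+1) (l+k+1)) (fun i => wt s i) (wt s l)
          (fun x hx => by
            simp only [Finset.mem_Icc] at hx
            exact wt_window (by omega) (by omega) hls)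
        rw [hcard] at this
        calc ((k:ℝ)+1) * wt s l = (k+1 : ℕ) • wt s l := by
              rw [nsmul_eq_mul]; push_cast; ring
          _ ≤ _ := this
      have hb1 : (s:ℝ) - 2*l = (k:ℝ)+2 := by
        have : (s:ℝ) = 2*l + k + 2 := by exact_mod_cast congrArg (Nat.cast : ℕ → ℝ) hs
        linarith
      have hwtop : wt s ((l+k+1)+1) = wt s l := by
        unfold wt
        have h1 : s - ((l+k+1)+1) = l := by omega
        have h2 : s - l = (l+k+1)+1 := by omega
        rw [h1, h2, mul_comm]
      have hinner : ∀ i ∈ Finset.Icc (l+1) (l+k+1),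
          (((k:ℝ)+2)*(((k:ℝ)+2)+2) - 3*((s:ℝ)-2*i)^2) * wt s i
          = ((k:ℝ)*((k:ℝ)+2) - 3*((s:ℝ)-2*i)^2) * wt s i + (4*(k:ℝ)+8) * wt s i := by
        intro i _; ring
      push_cast
      rw [Finset.sum_congr rfl hinner, Finset.sum_add_distrib, ← Finset.mul_sum]
      have e1 : ((s:ℝ) - 2*(l:ℝ))^2 = ((k:ℝ)+2)^2 := by rw [hb1]
      have e2 : ((s:ℝ) - 2*((l:ℝ)+(k:ℝ)+1+1))^2 = ((k:ℝ)+2)^2 := by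
        have : (s:ℝ) - 2*((l:ℝ)+(k:ℝ)+1+1) = -((k:ℝ)+2) := by
          have hcast : (s:ℝ) = 2*l + k + 2 := by exact_mod_cast congrArg (Nat.cast : ℕ → ℝ) hs
          linarith
        rw [this]; ring
      rw [hwtop]
      have hwl := wt_pos s l
      have hk0 : (0:ℝ) ≤ 4*(k:ℝ)+8 := by positivity
      nlinarith [hIH, hwts, hwl, e1, e2, sq_nonneg ((k:ℝ)+2)]

lemma fiber_key (n s : ℕ) (hs : s ≤ 2*n+2) :
    0 ≤ ∑ i ∈ Finset.Icc (s - min s (n+1)) (s - (s - min s (n+1))),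
      ((2*(n:ℝ)+4-(s:ℝ))*(2*(n:ℝ)+2-(s:ℝ)) - 3*((s:ℝ)-2*i)^2) * wt s i := by
  set l := s - min s (n+1) with hl
  set k := s - 2*l with hk
  have hs2 : s = 2*l + k := by omega
  have hksmall : k + s ≤ 2*n + 2 := by omega
  have hsplit : ∀ i ∈ Finset.Icc l (s-l),
      ((2*(n:ℝ)+4-(s:ℝ))*(2*(n:ℝ)+2-(s:ℝ)) - 3*((s:ℝ)-2*i)^2) * wt s i
      = (((k:ℝ))*((k:ℝ)+2) - 3*((s:ℝ)-2*i)^2) * wt s i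
        + ((2*(n:ℝ)+4-(s:ℝ))*(2*(n:ℝ)+2-(s:ℝ)) - ((k:ℝ))*((k:ℝ)+2)) * wt s i := by
    intro i _; ring
  rw [Finset.sum_congr rfl hsplit, Finset.sum_add_distrib, ← Finset.mul_sum]
  have h1 := key_window s k l hs2
  have hcoef : 0 ≤ (2*(n:ℝ)+4-(s:ℝ))*(2*(n:ℝ)+2-(s:ℝ)) - ((k:ℝ))*((k:ℝ)+2) := by
    have hc1 : (k:ℝ) + (s:ℝ) ≤ 2*(n:ℝ)+2 := by exact_mod_cast hksmall
    have hc2 : (s:ℝ) ≤ 2*(n:ℝ)+2 := by exact_mod_cast hs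
    have hc3 : (0:ℝ) ≤ k := Nat.cast_nonneg k
    nlinarith
  have hw : 0 ≤ ∑ i ∈ Finset.Icc l (s-l), wt s i :=
    Finset.sum_nonneg (fun i _ => (wt_pos s i).le)
  nlinarith [mul_nonneg hcoef hw]

/-- The reverse-Cauchy-Schwarz inequality 2·q1² ≥ q0·q2. -/
lemma sum_sq (n : ℕ) {a : ℝ} (ha : 0 < a) :
    (∑ j ∈ Finset.range (n+2), a^j/(j.factorial : ℝ)) *
      (∑ j ∈ Finset.range (n+2), ((n:ℝ)+2-(j:ℝ))*((n:ℝ)+3-(j:ℝ))*(a^j/(j.factorial : ℝ)))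
    ≤ 2*(∑ j ∈ Finset.range (n+2), ((n:ℝ)+2-(j:ℝ))*(a^j/(j.factorial : ℝ)))^2 := by
  set c : ℕ → ℝ := fun j => a^j/(j.factorial : ℝ) with hc
  set x : ℕ → ℝ := fun j => (n:ℝ)+2-j with hx
  set R := Finset.range (n+2) with hR
  have h1 : (∑ j ∈ R, x j * c j)^2 = ∑ i ∈ R, ∑ j ∈ R, (x i * c i) * (x j * c j) := by
    rw [sq, Finset.sum_mul_sum]
  have h2 : (∑ j ∈ R, c j) * (∑ j ∈ R, x j * (x j + 1) * c j)
      = ∑ i ∈ R, ∑ j ∈ R, c i * (x j * (x j + 1) * c j) := by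
    rw [Finset.sum_mul_sum]
  have key : 0 ≤ ∑ i ∈ R, ∑ j ∈ R,
      (2*(x i * c i) * (x j * c j) - c i * (x j * (x j + 1) * c j)) := by
    have hswap : ∑ i ∈ R, ∑ j ∈ R, (2*(x i * c i) * (x j * c j) - c i * (x j * (x j + 1) * c j))
        = ∑ i ∈ R, ∑ j ∈ R, (2*(x j * c j) * (x i * c i) - c j * (x i * (x i + 1) * c i)) := by
      rw [Finset.sum_comm]
    have hsym : (2:ℝ) * ∑ i ∈ R, ∑ j ∈ R, (2*(x i * c i) * (x j * c j) - c i * (x j * (x j + 1) * c j))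
        = ∑ i ∈ R, ∑ j ∈ R,
          (4*(x i * c i) * (x j * c j) - c i * (x j * (x j + 1) * c j) - c j * (x i * (x i + 1) * c i)) := by
      rw [two_mul]
      nth_rewrite 2 [hswap]
      rw [← Finset.sum_add_distrib]
      apply Finset.sum_congr rfl
      intro i _
      rw [← Finset.sum_add_distrib]
      apply Finset.sum_congr rfl
      intro j _
      ring
    have main : 0 ≤ ∑ i ∈ R, ∑ j ∈ R,
        (4*(x i * c i) * (x j * c j) - c i * (x j * (x j + 1) * c j) - c j * (x i * (x i + 1) * c i)) := by
      rw [← Finset.sum_product' (s := R) (t := R)]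
      rw [← Finset.sum_fiberwise_of_maps_to (g := fun p => p.1 + p.2) (t := Finset.range (2*n+3))
        (fun p hp => by
          simp only [Finset.mem_product, Finset.mem_range, R] at hp ⊢
          omega)]
      apply Finset.sum_nonneg
      intro s' _
      have hbij : ∑ p ∈ (R ×ˢ R).filter (fun p => p.1 + p.2 = s'),
            (4*(x p.1 * c p.1) * (x p.2 * c p.2) - c p.1 * (x p.2 * (x p.2 + 1) * c p.2)
              - c p.2 * (x p.1 * (x p.1 + 1) * c p.1))
          = ∑ i ∈ Finset.Icc (s' - min s' (n+1)) (s' - (s' - min s' (n+1))),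
            (4*(x i * c i) * (x (s'-i) * c (s'-i)) - c i * (x (s'-i) * (x (s'-i) + 1) * c (s'-i))
              - c (s'-i) * (x i * (x i + 1) * c i)) := by
        apply Finset.sum_nbij' (fun p => p.1) (fun i => (i, s' - i))
        · intro p hp
          simp only [Finset.mem_product, Finset.mem_range, Finset.mem_filter, R, Finset.mem_Icc] at hp ⊢
          omega
        · intro i hi
          simp only [Finset.mem_product, Finset.mem_range, Finset.mem_filter, R, Finset.mem_Icc] at hi ⊢
          omega
        · intro p hp
          simp only [Finset.mem_product, Finset.mem_range, Finset.mem_filter, R] at hp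
          have : s' - p.1 = p.2 := by omega
          simp [this]
        · intro i hi; rfl
        · intro p hp
          simp only [Finset.mem_product, Finset.mem_range, Finset.mem_filter, R] at hp
          have : s' - p.1 = p.2 := by omega
          rw [this]
      rw [hbij]
      have hterm : ∀ i ∈ Finset.Icc (s' - min s' (n+1)) (s' - (s' - min s' (n+1))),
          (4*(x i * c i) * (x (s'-i) * c (s'-i)) - c i * (x (s'-i) * (x (s'-i) + 1) * c (s'-i))
              - c (s'-i) * (x i * (x i + 1) * c i))
          = (a^s'/2) * (((2*(n:ℝ)+4-(s':ℝ))*(2*(n:ℝ)+2-(s':ℝ)) - 3*((s':ℝ)-2*i)^2) * wt s' i) := by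
        intro i hi
        simp only [Finset.mem_Icc] at hi
        have his : i ≤ s' := by omega
        have hcast : ((s' - i : ℕ) : ℝ) = (s' : ℝ) - (i : ℝ) := Nat.cast_sub his
        have hcc : c i * c (s' - i) = a^s' * wt s' i := by
          simp only [hc, wt]
          rw [div_mul_div_comm, ← pow_add]
          have : i + (s' - i) = s' := by omega
          rw [this, div_eq_mul_inv]
        simp only [hx]
        rw [hcast]
        linear_combination (4*((n:ℝ)+2-(i:ℝ))*((n:ℝ)+2-((s':ℝ)-(i:ℝ))) - ((n:ℝ)+2-((s':ℝ)-(i:ℝ)))*((n:ℝ)+2-((s':ℝ)-(i:ℝ))+1) - ((n:ℝ)+2-(i:ℝ))*((n:ℝ)+2-(i:ℝ)+1)) * hcc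
      rw [Finset.sum_congr rfl hterm, ← Finset.mul_sum]
      have hs2 : s' ≤ 2*n+2 := by
        rename_i hs'mem
        simp only [Finset.mem_range] at hs'mem
        omega
      have := fiber_key n s' hs2
      have hapow : (0:ℝ) ≤ a^s'/2 := by positivity
      exact mul_nonneg hapow this
    linarith [hsym, main]
  have hsplit2 : (∑ i ∈ R, ∑ j ∈ R, (2*(x i * c i) * (x j * c j) - c i * (x j * (x j + 1) * c j)))
      = 2*(∑ i ∈ R, ∑ j ∈ R, (x i * c i) * (x j * c j)) - ∑ i ∈ R, ∑ j ∈ R, c i * (x j * (x j + 1) * c j) := by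
    have hq : ∀ i j : ℕ, 2*(x i * c i) * (x j * c j) - c i * (x j * (x j + 1) * c j)
        = 2*((x i * c i) * (x j * c j)) - c i * (x j * (x j + 1) * c j) := fun i j => by ring
    simp only [hq, Finset.sum_sub_distrib, ← Finset.mul_sum]
  have e1 : ∑ j ∈ R, ((n:ℝ)+2-(j:ℝ))*((n:ℝ)+3-(j:ℝ))*(a^j/(j.factorial:ℝ)) = ∑ j ∈ R, x j*(x j+1)*c j :=
    Finset.sum_congr rfl (fun j _ => by simp only [hx, hc]; ring)
  have e2 : ∑ j ∈ R, ((n:ℝ)+2-(j:ℝ))*(a^j/(j.factorial:ℝ)) = ∑ j ∈ R, x j * c j :=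
    Finset.sum_congr rfl (fun j _ => by simp only [hx, hc])
  have e3 : (∑ j ∈ R, a^j/(j.factorial:ℝ)) = ∑ j ∈ R, c j := rfl
  rw [e1, e2, e3]
  nlinarith [h1, h2, key, hsplit2]

lemma shift_helper (m : ℕ) (a : ℝ) (G : ℕ → ℝ) :
    ∑ j ∈ Finset.range (m+1), (j:ℝ)*G j*(a^j/(j.factorial:ℝ))
      = a * ∑ j ∈ Finset.range m, G (j+1)*(a^j/(j.factorial:ℝ)) := by
  rw [Finset.sum_range_succ']
  simp only [Nat.cast_zero, zero_mul, add_zero]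
  rw [Finset.mul_sum]
  apply Finset.sum_congr rfl
  intro j _
  have hf : (((j+1).factorial : ℕ) : ℝ) = ((j:ℝ)+1) * (j.factorial:ℝ) := by
    rw [Nat.factorial_succ]; push_cast; ring
  have hj1 : ((j:ℝ)+1) ≠ 0 := by positivity
  have hfj : (j.factorial:ℝ) ≠ 0 := by exact_mod_cast j.factorial_pos.ne'
  rw [hf]
  push_cast
  field_simp
  ring

lemma q1_id (n : ℕ) (a : ℝ) :
    ((n:ℝ)+2) * s (n+2) a - a * s (n+1) a
      = ∑ j ∈ Finset.range (n+2), ((n:ℝ)+2-(j:ℝ))*(a^j/(j.factorial:ℝ)) := by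
  have hs1 : s (n+1) a = ∑ j ∈ Finset.range (n+2), a^j/(j.factorial:ℝ) := rfl
  have hs2 : s (n+2) a = ∑ j ∈ Finset.range (n+3), a^j/(j.factorial:ℝ) := rfl
  have h1 : a * ∑ j ∈ Finset.range (n+2), a^j/(j.factorial:ℝ)
      = ∑ j ∈ Finset.range (n+3), (j:ℝ)*(a^j/(j.factorial:ℝ)) := by
    have h := shift_helper (n+2) a (fun _ => (1:ℝ))
    simp only [mul_one, one_mul] at h
    exact h.symm
  have hsplitsum : ∑ j ∈ Finset.range (n+3), (((n:ℝ)+2) - (j:ℝ))*(a^j/(j.factorial:ℝ))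
      = ((n:ℝ)+2) * (∑ j ∈ Finset.range (n+3), a^j/(j.factorial:ℝ))
        - ∑ j ∈ Finset.range (n+3), (j:ℝ)*(a^j/(j.factorial:ℝ)) := by
    rw [Finset.mul_sum, ← Finset.sum_sub_distrib]
    apply Finset.sum_congr rfl; intro j _; ring
  have hstrip : ∑ j ∈ Finset.range (n+3), (((n:ℝ)+2) - (j:ℝ))*(a^j/(j.factorial:ℝ))
      = ∑ j ∈ Finset.range (n+2), ((n:ℝ)+2-(j:ℝ))*(a^j/(j.factorial:ℝ)) := by
    rw [Finset.sum_range_succ]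
    have : ((n:ℝ)+2-((n+2:ℕ):ℝ)) = 0 := by push_cast; ring
    rw [this, zero_mul, add_zero]
  rw [hs1, hs2, h1, ← hstrip, hsplitsum]

lemma q2_id (n : ℕ) (a : ℝ) :
    ((n:ℝ)+2)*((n:ℝ)+3) * s (n+3) a - 2*a*((n:ℝ)+2)*s (n+2) a + a^2 * s (n+1) a
      = ∑ j ∈ Finset.range (n+2), ((n:ℝ)+2-(j:ℝ))*((n:ℝ)+3-(j:ℝ))*(a^j/(j.factorial:ℝ)) := by
  have hs1 : s (n+1) a = ∑ j ∈ Finset.range (n+2), a^j/(j.factorial:ℝ) := rfl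
  have hs2 : s (n+2) a = ∑ j ∈ Finset.range (n+3), a^j/(j.factorial:ℝ) := rfl
  have hs3 : s (n+3) a = ∑ j ∈ Finset.range (n+4), a^j/(j.factorial:ℝ) := rfl
  have h1 : a * ∑ j ∈ Finset.range (n+3), a^j/(j.factorial:ℝ)
      = ∑ j ∈ Finset.range (n+4), (j:ℝ)*(a^j/(j.factorial:ℝ)) := by
    have h := shift_helper (n+3) a (fun _ => (1:ℝ))
    simp only [mul_one, one_mul] at h
    exact h.symm
  have h2 : a * ∑ j ∈ Finset.range (n+2), a^j/(j.factorial:ℝ)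
      = ∑ j ∈ Finset.range (n+3), (j:ℝ)*(a^j/(j.factorial:ℝ)) := by
    have h := shift_helper (n+2) a (fun _ => (1:ℝ))
    simp only [mul_one, one_mul] at h
    exact h.symm
  have h3 : a * ∑ j ∈ Finset.range (n+3), (j:ℝ)*(a^j/(j.factorial:ℝ))
      = ∑ j ∈ Finset.range (n+4), (j:ℝ)*((j:ℝ)-1)*(a^j/(j.factorial:ℝ)) := by
    have h := shift_helper (n+3) a (fun k => (k:ℝ)-1)
    simp only [Nat.cast_add, Nat.cast_one, add_sub_cancel_right] at h
    exact h.symm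
  have e1 : a^2 * ∑ j ∈ Finset.range (n+2), a^j/(j.factorial:ℝ)
      = ∑ j ∈ Finset.range (n+4), (j:ℝ)*((j:ℝ)-1)*(a^j/(j.factorial:ℝ)) := by
    rw [← h3, ← h2]; ring
  have hsplitsum : ∑ j ∈ Finset.range (n+4),
        (((n:ℝ)+2)*((n:ℝ)+3) - 2*((n:ℝ)+2)*(j:ℝ) + (j:ℝ)*((j:ℝ)-1))*(a^j/(j.factorial:ℝ))
      = ((n:ℝ)+2)*((n:ℝ)+3) * (∑ j ∈ Finset.range (n+4), a^j/(j.factorial:ℝ))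
        - 2*((n:ℝ)+2) * (∑ j ∈ Finset.range (n+4), (j:ℝ)*(a^j/(j.factorial:ℝ)))
        + ∑ j ∈ Finset.range (n+4), (j:ℝ)*((j:ℝ)-1)*(a^j/(j.factorial:ℝ)) := by
    rw [Finset.mul_sum, Finset.mul_sum, ← Finset.sum_sub_distrib, ← Finset.sum_add_distrib]
    apply Finset.sum_congr rfl; intro j _; ring
  have hstrip : ∑ j ∈ Finset.range (n+4),
        (((n:ℝ)+2)*((n:ℝ)+3) - 2*((n:ℝ)+2)*(j:ℝ) + (j:ℝ)*((j:ℝ)-1))*(a^j/(j.factorial:ℝ))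
      = ∑ j ∈ Finset.range (n+2), ((n:ℝ)+2-(j:ℝ))*((n:ℝ)+3-(j:ℝ))*(a^j/(j.factorial:ℝ)) := by
    rw [show n+4 = (n+3)+1 by ring, Finset.sum_range_succ, Finset.sum_range_succ]
    have c1 : (((n:ℝ)+2)*((n:ℝ)+3) - 2*((n:ℝ)+2)*(((n+3:ℕ)):ℝ) + (((n+3:ℕ)):ℝ)*((((n+3:ℕ)):ℝ)-1)) = 0 := by
      push_cast; ring
    have c2 : (((n:ℝ)+2)*((n:ℝ)+3) - 2*((n:ℝ)+2)*(((n+2:ℕ)):ℝ) + (((n+2:ℕ)):ℝ)*((((n+2:ℕ)):ℝ)-1)) = 0 := by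
      push_cast; ring
    rw [c1, c2, zero_mul, zero_mul, add_zero, add_zero]
    apply Finset.sum_congr rfl; intro j _; ring
  calc ((n:ℝ)+2)*((n:ℝ)+3) * s (n+3) a - 2*a*((n:ℝ)+2)*s (n+2) a + a^2 * s (n+1) a
      = ((n:ℝ)+2)*((n:ℝ)+3) * (∑ j ∈ Finset.range (n+4), a^j/(j.factorial:ℝ))
        - 2*((n:ℝ)+2) * (a * ∑ j ∈ Finset.range (n+3), a^j/(j.factorial:ℝ))
        + a^2 * ∑ j ∈ Finset.range (n+2), a^j/(j.factorial:ℝ) := by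
        rw [hs1, hs2, hs3]; ring
    _ = ((n:ℝ)+2)*((n:ℝ)+3) * (∑ j ∈ Finset.range (n+4), a^j/(j.factorial:ℝ))
        - 2*((n:ℝ)+2) * (∑ j ∈ Finset.range (n+4), (j:ℝ)*(a^j/(j.factorial:ℝ)))
        + ∑ j ∈ Finset.range (n+4), (j:ℝ)*((j:ℝ)-1)*(a^j/(j.factorial:ℝ)) := by
        rw [h1, e1]
    _ = ∑ j ∈ Finset.range (n+4),
        (((n:ℝ)+2)*((n:ℝ)+3) - 2*((n:ℝ)+2)*(j:ℝ) + (j:ℝ)*((j:ℝ)-1))*(a^j/(j.factorial:ℝ)) := hsplitsum.symm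
    _ = _ := hstrip

lemma s_pos {a : ℝ} (ha : 0 < a) (n : ℕ) : 0 < s n a := by
  unfold s
  apply Finset.sum_pos
  · intro j _
    have hf : (0:ℝ) < (j.factorial : ℝ) := by exact_mod_cast j.factorial_pos
    positivity
  · exact ⟨0, Finset.mem_range.mpr (by omega)⟩

set_option maxHeartbeats 2000000 in
theorem stmt_0 (a : ℝ) (ha : 0 < a) (n : ℕ) :
    s n a / s (n + 1) a + s (n + 2) a / s (n + 3) a < 2 * (s (n + 1) a / s (n + 2) a) := by
  have hB : 0 < s (n+1) a := s_pos ha (n+1)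
  have hC : 0 < s (n+2) a := s_pos ha (n+2)
  have hD : 0 < s (n+3) a := s_pos ha (n+3)
  -- positivity of the q-sums
  have hterm : ∀ j ∈ Finset.range (n+2), (0:ℝ) < a^j/(j.factorial:ℝ) := by
    intro j _
    have hf : (0:ℝ) < (j.factorial : ℝ) := by exact_mod_cast j.factorial_pos
    positivity
  have hQ1pos : 0 < ∑ j ∈ Finset.range (n+2), ((n:ℝ)+2-(j:ℝ))*(a^j/(j.factorial:ℝ)) := by
    apply Finset.sum_pos
    · intro j hj
      have hj' : (j:ℝ) ≤ (n:ℝ)+1 := by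
        have : j ≤ n+1 := by have := Finset.mem_range.mp hj; omega
        exact_mod_cast this
      have := hterm j hj
      nlinarith
    · exact ⟨0, Finset.mem_range.mpr (by omega)⟩
  have hQ2pos : 0 < ∑ j ∈ Finset.range (n+2), ((n:ℝ)+2-(j:ℝ))*((n:ℝ)+3-(j:ℝ))*(a^j/(j.factorial:ℝ)) := by
    apply Finset.sum_pos
    · intro j hj
      have hj' : (j:ℝ) ≤ (n:ℝ)+1 := by
        have : j ≤ n+1 := by have := Finset.mem_range.mp hj; omega
        exact_mod_cast this
      have := hterm j hj
      have c1 : (0:ℝ) < (n:ℝ)+2-(j:ℝ) := by linarith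
      have c2 : (0:ℝ) < (n:ℝ)+3-(j:ℝ) := by linarith
      exact mul_pos (mul_pos c1 c2) this
    · exact ⟨0, Finset.mem_range.mpr (by omega)⟩
  -- the key inequality
  have hzero : (∑ j ∈ Finset.range (n+2), a^j/(j.factorial:ℝ)) = s (n+1) a := rfl
  have hkey : s (n+1) a * (∑ j ∈ Finset.range (n+2), ((n:ℝ)+2-(j:ℝ))*((n:ℝ)+3-(j:ℝ))*(a^j/(j.factorial:ℝ)))
      ≤ 2*(∑ j ∈ Finset.range (n+2), ((n:ℝ)+2-(j:ℝ))*(a^j/(j.factorial:ℝ)))^2 := by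
    rw [← hzero]
    exact sum_sq n ha
  -- Psi > 0
  have hPsi : 0 < (((n:ℝ)+2)*s (n+2) a - a*s (n+1) a)
        * (((n:ℝ)+2)*((n:ℝ)+3)*s (n+3) a - 2*a*((n:ℝ)+2)*s (n+2) a + a^2*s (n+1) a)
      + 2*a*(((n:ℝ)+2)*s (n+2) a - a*s (n+1) a)^2
      - a*s (n+1) a*(((n:ℝ)+2)*((n:ℝ)+3)*s (n+3) a - 2*a*((n:ℝ)+2)*s (n+2) a + a^2*s (n+1) a) := by
    rw [q1_id n a, q2_id n a]
    nlinarith [mul_pos hQ1pos hQ2pos, mul_nonneg ha.le (sub_nonneg.mpr hkey), hkey]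
  -- structural relations
  have hAB : s (n+1) a = s n a + a^(n+1)/(((n+1).factorial:ℕ):ℝ) :=
    Finset.sum_range_succ (fun j => a^j/(j.factorial:ℝ)) (n+1)
  have hBC : s (n+2) a = s (n+1) a + a^(n+2)/(((n+2).factorial:ℕ):ℝ) :=
    Finset.sum_range_succ (fun j => a^j/(j.factorial:ℝ)) (n+2)
  have hCD : s (n+3) a = s (n+2) a + a^(n+3)/(((n+3).factorial:ℕ):ℝ) :=
    Finset.sum_range_succ (fun j => a^j/(j.factorial:ℝ)) (n+3)
  have hf1 : (((n+1).factorial:ℕ):ℝ) ≠ 0 := by exact_mod_cast (n+1).factorial_pos.ne'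
  have hfact2 : (((n+2).factorial:ℕ):ℝ) = ((n:ℝ)+2)*(((n+1).factorial:ℕ):ℝ) := by
    rw [show n+2 = (n+1)+1 by ring, Nat.factorial_succ]; push_cast; ring
  have hfact3 : (((n+3).factorial:ℕ):ℝ) = ((n:ℝ)+3)*((n:ℝ)+2)*(((n+1).factorial:ℕ):ℝ) := by
    rw [show n+3 = (n+2)+1 by ring, Nat.factorial_succ, show n+2 = (n+1)+1 by ring, Nat.factorial_succ]
    push_cast; ring
  have hpow2 : a^(n+2) = a^(n+1)*a := pow_succ a (n+1)
  have hpow3 : a^(n+3) = a^(n+1)*a*a := by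
    rw [show n+3 = (n+2)+1 by ring, pow_succ, hpow2]
  -- the big polynomial identity
  have bigid : (2*(s (n+1) a)^2*(s (n+3) a) - s n a * s (n+2) a * s (n+3) a - s (n+1) a * (s (n+2) a)^2)
        * (((n:ℝ)+2)^2*((n:ℝ)+3)*(((n+1).factorial:ℕ):ℝ))
      = a^(n+1) * ((((n:ℝ)+2)*s (n+2) a - a*s (n+1) a)
          * (((n:ℝ)+2)*((n:ℝ)+3)*s (n+3) a - 2*a*((n:ℝ)+2)*s (n+2) a + a^2*s (n+1) a)
        + 2*a*(((n:ℝ)+2)*s (n+2) a - a*s (n+1) a)^2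
        - a*s (n+1) a*(((n:ℝ)+2)*((n:ℝ)+3)*s (n+3) a - 2*a*((n:ℝ)+2)*s (n+2) a + a^2*s (n+1) a)) := by
    have hA' : s n a = s (n+1) a - a^(n+1)/(((n+1).factorial:ℕ):ℝ) := by linarith [hAB]
    rw [hA', hCD, hBC, hfact2, hfact3, hpow2, hpow3]
    field_simp
    ring
  have hmulpos : (0:ℝ) < ((n:ℝ)+2)^2*((n:ℝ)+3)*(((n+1).factorial:ℕ):ℝ) := by
    have : (0:ℝ) < (((n+1).factorial:ℕ):ℝ) := by exact_mod_cast (n+1).factorial_pos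
    positivity
  have hapos : (0:ℝ) < a^(n+1) := pow_pos ha (n+1)
  have hG : 0 < 2*(s (n+1) a)^2*(s (n+3) a) - s n a * s (n+2) a * s (n+3) a - s (n+1) a * (s (n+2) a)^2 := by
    by_contra hcon
    push_neg at hcon
    have h1 : (2*(s (n+1) a)^2*(s (n+3) a) - s n a * s (n+2) a * s (n+3) a - s (n+1) a * (s (n+2) a)^2)
        * (((n:ℝ)+2)^2*((n:ℝ)+3)*(((n+1).factorial:ℕ):ℝ)) ≤ 0 :=
      mul_nonpos_of_nonpos_of_nonneg hcon hmulpos.le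
    nlinarith [mul_pos hapos hPsi]
  -- final fraction manipulation
  rw [div_add_div _ _ hB.ne' hD.ne', show (2:ℝ)*(s (n+1) a/s (n+2) a) = (2*s (n+1) a)/s (n+2) a from (mul_div_assoc 2 _ _).symm,
    div_lt_div_iff₀ (mul_pos hB hD) hC]
  nlinarith [hG]
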